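/- Let K be a field, I ⊆ K[X] = K[x₁,…,x_n] an ideal, and F ∈ K[x_n] monic with ⟨F⟩ = I ∩ K[x_n] and deg(F) = dim_K(K[X]/I) (in particular this dimension is finite). Then there exist polynomials h₁,…,h_{n-1} ∈ K[x_n] such that I = ⟨x₁ − h₁(x_n),…, x_{n-1} − h_{n-1}(x_n), F(x_n)⟩. -/

import Mathlib

open MvPolynomial

set_option maxHeartbeats 1600000
set_option synthInstance.maxHeartbeats 400000

/-- Let `K` be a field, `I ⊆ K[x₁,…,xₙ]` an ideal, `F ∈ K[xₙ]` monic with `⟨F⟩ = I ∩ K[xₙ]`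
and `deg F = dim_K K[X]/I` (finite). Then there are `h₁,…,h_{n-1} ∈ K[xₙ]` with
`I = ⟨x₁ - h₁(xₙ), …, x_{n-1} - h_{n-1}(xₙ), F(xₙ)⟩`. -/
theorem statement12 (n : ℕ) (K : Type*) [Field K]
    (I : Ideal (MvPolynomial (Fin (n + 1)) K))
    (F : Polynomial K) (hmonic : F.Monic)
    (hF : Ideal.comap (Polynomial.aeval (X (Fin.last n)) :
        Polynomial K →ₐ[K] MvPolynomial (Fin (n + 1)) K) I = Ideal.span {F})
    (hfin : Module.Finite K (MvPolynomial (Fin (n + 1)) K ⧸ I))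
    (hdeg : F.natDegree = Module.finrank K (MvPolynomial (Fin (n + 1)) K ⧸ I)) :
    ∃ h : Fin n → Polynomial K,
      I = Ideal.span
        ((Set.range fun i : Fin n =>
            (X i.castSucc : MvPolynomial (Fin (n + 1)) K) -
              Polynomial.aeval (X (Fin.last n)) (h i)) ∪
          {Polynomial.aeval (X (Fin.last n) : MvPolynomial (Fin (n + 1)) K) F}) := by
  classical
  set R := MvPolynomial (Fin (n + 1)) K with hR
  let φ : Polynomial K →ₐ[K] R := Polynomial.aeval (X (Fin.last n))
  have hFne : F ≠ 0 := hmonic.ne_zero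
  -- F(xₙ) ∈ I
  have hφFI : φ F ∈ I := by
    have hmem : F ∈ Ideal.span {F} := Ideal.mem_span_singleton_self F
    rw [← hF] at hmem
    exact hmem
  -- the class of xₙ in K[X]/I is a root of F
  have hz : Polynomial.aeval ((Ideal.Quotient.mkₐ K I) (X (Fin.last n))) F = 0 := by
    rw [Polynomial.aeval_algHom_apply, Ideal.Quotient.mkₐ_eq_mk]
    exact Ideal.Quotient.eq_zero_iff_mem.mpr hφFI
  -- power basis of K[t]/(F)
  have pbfin : Module.Finite K (AdjoinRoot F) :=
    Module.Finite.of_basis (AdjoinRoot.powerBasis hFne).basis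
  haveI := pbfin
  have hfrAdj : Module.finrank K (AdjoinRoot F) = F.natDegree := by
    rw [(AdjoinRoot.powerBasis hFne).finrank]
    rfl
  -- the induced map K[t]/(F) → K[X]/I
  let ι : AdjoinRoot F →ₐ[K] R ⧸ I :=
    AdjoinRoot.liftAlgHom F (Algebra.ofId K _) ((Ideal.Quotient.mkₐ K I) (X (Fin.last n))) hz
  have hι_mk : ∀ a : Polynomial K,
      ι (AdjoinRoot.mk F a) = Ideal.Quotient.mk I (φ a) := by
    intro a
    show Polynomial.aeval _ a = _
    rw [Polynomial.aeval_algHom_apply]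
    rfl
  have hι_inj : Function.Injective ι := by
    rw [injective_iff_map_eq_zero]
    intro x hx
    obtain ⟨a, rfl⟩ := AdjoinRoot.mk_surjective x
    rw [hι_mk] at hx
    have h1 : φ a ∈ I := by rwa [Ideal.Quotient.eq_zero_iff_mem] at hx
    have h2 : a ∈ Ideal.span {F} := by rw [← hF]; exact h1
    rw [AdjoinRoot.mk_eq_zero]
    exact (Ideal.mem_span_singleton).mp h2
  -- ι is surjective by dimension count
  have hι_surj : Function.Surjective ι := by
    have hfr : Module.finrank K (AdjoinRoot F) = Module.finrank K (R ⧸ I) := by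
      rw [hfrAdj, hdeg]
    exact (LinearMap.injective_iff_surjective_of_finrank_eq_finrank
      (f := ι.toLinearMap) hfr).mp hι_inj
  have hψ_surj : ∀ y : R ⧸ I, ∃ p : Polynomial K, Ideal.Quotient.mk I (φ p) = y := by
    intro y
    obtain ⟨x, hx⟩ := hι_surj y
    obtain ⟨a, rfl⟩ := AdjoinRoot.mk_surjective x
    exact ⟨a, by rw [← hι_mk]; exact hx⟩
  choose h hh using fun i : Fin n => hψ_surj (Ideal.Quotient.mk I (X i.castSucc))
  refine ⟨h, ?_⟩
  set G : Set R := (Set.range fun i : Fin n =>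
      (X i.castSucc : R) - φ (h i)) ∪ {φ F} with hG
  set J : Ideal R := Ideal.span G with hJ
  -- J ⊆ I
  have hJI : J ≤ I := by
    rw [hJ, Ideal.span_le]
    rintro x (⟨i, rfl⟩ | rfl)
    · have h1 := (Ideal.Quotient.mk_eq_mk_iff_sub_mem (φ (h i)) (X i.castSucc)).mp (hh i)
      simpa using I.neg_mem h1
    · exact hφFI
  -- generators in J
  have hgen1 : ∀ i : Fin n, (X i.castSucc : R) - φ (h i) ∈ J :=
    fun i => Ideal.subset_span (Or.inl ⟨i, rfl⟩)
  have hgen2 : φ F ∈ J := Ideal.subset_span (Or.inr rfl)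
  -- the class of xₙ in K[X]/J is a root of F
  have hzJ : Polynomial.aeval ((Ideal.Quotient.mkₐ K J) (X (Fin.last n))) F = 0 := by
    rw [Polynomial.aeval_algHom_apply, Ideal.Quotient.mkₐ_eq_mk]
    exact Ideal.Quotient.eq_zero_iff_mem.mpr hgen2
  let κ : AdjoinRoot F →ₐ[K] R ⧸ J :=
    AdjoinRoot.liftAlgHom F (Algebra.ofId K _) ((Ideal.Quotient.mkₐ K J) (X (Fin.last n))) hzJ
  have hκ_mk : ∀ a : Polynomial K,
      κ (AdjoinRoot.mk F a) = Ideal.Quotient.mk J (φ a) := by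
    intro a
    show Polynomial.aeval _ a = _
    rw [Polynomial.aeval_algHom_apply]
    rfl
  -- every class mod J is a polynomial in xₙ
  have key : (⊤ : Subalgebra K R) ≤
      Subalgebra.comap (Ideal.Quotient.mkₐ K J)
        ((Ideal.Quotient.mkₐ K J).comp φ).range := by
    rw [← MvPolynomial.adjoin_range_X]
    apply Algebra.adjoin_le
    rintro _ ⟨j, rfl⟩
    simp only [SetLike.mem_coe, Subalgebra.mem_comap]
    refine Fin.lastCases ?_ ?_ j
    · refine ⟨Polynomial.X, ?_⟩
      simp [φ]
    · intro i
      refine ⟨h i, ?_⟩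
      have : Ideal.Quotient.mk J (φ (h i)) = Ideal.Quotient.mk J (X i.castSucc) := by
        rw [Ideal.Quotient.mk_eq_mk_iff_sub_mem]
        simpa using (J.neg_mem (hgen1 i))
      simpa [Ideal.Quotient.mkₐ_eq_mk] using this
  have hκ_surj : Function.Surjective κ := by
    intro y
    obtain ⟨q, rfl⟩ := Ideal.Quotient.mk_surjective y
    have hq := key (Algebra.mem_top (x := q))
    rw [Subalgebra.mem_comap] at hq
    obtain ⟨p, hp⟩ := hq
    exact ⟨AdjoinRoot.mk F p, by rw [hκ_mk]; simpa [Ideal.Quotient.mkₐ_eq_mk] using hp⟩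
  haveI hfinJ : Module.Finite K (R ⧸ J) :=
    Module.Finite.of_surjective κ.toLinearMap hκ_surj
  have hfrJ : Module.finrank K (R ⧸ J) ≤ F.natDegree := by
    rw [← hfrAdj]
    have h2 : Function.Surjective κ.toLinearMap := hκ_surj
    have h1 := LinearMap.finrank_range_le κ.toLinearMap
    rwa [LinearMap.range_eq_top.mpr h2, finrank_top] at h1
  -- the projection K[X]/J → K[X]/I
  let q : (R ⧸ J) →ₐ[K] R ⧸ I :=
    Ideal.Quotient.liftₐ J (Ideal.Quotient.mkₐ K I)
      (fun a ha => by
        rw [Ideal.Quotient.mkₐ_eq_mk, Ideal.Quotient.eq_zero_iff_mem]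
        exact hJI ha)
  have hq_mk : ∀ a : R, q (Ideal.Quotient.mk J a) = Ideal.Quotient.mk I a := by
    intro a
    show Ideal.Quotient.liftₐ J (Ideal.Quotient.mkₐ K I) _ (Ideal.Quotient.mk J a) = _
    rw [Ideal.Quotient.liftₐ_apply]
    rfl
  have hq_surj : Function.Surjective q := by
    intro y
    obtain ⟨a, rfl⟩ := Ideal.Quotient.mk_surjective y
    exact ⟨Ideal.Quotient.mk J a, hq_mk a⟩
  have hfrI : Module.finrank K (R ⧸ I) ≤ Module.finrank K (R ⧸ J) := by
    have h2 : Function.Surjective q.toLinearMap := hq_surj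
    have h1 := LinearMap.finrank_range_le q.toLinearMap
    rwa [LinearMap.range_eq_top.mpr h2, finrank_top] at h1
  have hfreq : Module.finrank K (R ⧸ J) = Module.finrank K (R ⧸ I) :=
    le_antisymm (by rw [← hdeg]; exact hfrJ) hfrI
  have hq_inj : Function.Injective q :=
    (LinearMap.injective_iff_surjective_of_finrank_eq_finrank
      (f := q.toLinearMap) hfreq).mpr hq_surj
  -- conclude I = J
  refine le_antisymm ?_ hJI
  intro x hx
  have h0 : q (Ideal.Quotient.mk J x) = q 0 := by
    rw [map_zero, hq_mk, Ideal.Quotient.eq_zero_iff_mem]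
    exact hx
  have := hq_inj h0
  rwa [Ideal.Quotient.eq_zero_iff_mem] at this
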